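/- Let ε > 0, κ₁ > κ > 0, δ(x₁) = ε + (κ₁−κ)x₁², and k(x) = (x₂ − κx₁²)/δ(x₁) − 1/2. Define v₂(x) = ( (6x₁/δ(x₁))(k(x)²−1/4), (k(x)+1/2) + G₂(x)(k(x)²−1/4) ), where G₂(x) = −2k(x) + (6x₁/δ(x₁))((κ₁+κ)x₁ + 2(κ₁−κ)x₁ k(x)). Then ∂_{x₁} v₂^{(1)} + ∂_{x₂} v₂^{(2)} = 0 everywhere. -/

import Mathlib

set_option maxHeartbeats 1000000


theorem stmt_13 (ε κ κ₁ : ℝ) (hε : 0 < ε) (hκ : 0 < κ) (hκ₁ : κ < κ₁)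
    (δ : ℝ → ℝ) (hδ : ∀ x₁, δ x₁ = ε + (κ₁ - κ) * x₁ ^ 2)
    (k : ℝ → ℝ → ℝ) (hk : ∀ x₁ x₂, k x₁ x₂ = (x₂ - κ * x₁ ^ 2) / δ x₁ - 1 / 2)
    (G₂ : ℝ → ℝ → ℝ)
    (hG₂ : ∀ x₁ x₂, G₂ x₁ x₂ =
      -2 * k x₁ x₂ +
        6 * x₁ / δ x₁ * ((κ₁ + κ) * x₁ + 2 * (κ₁ - κ) * x₁ * k x₁ x₂))
    (v₂fst v₂snd : ℝ → ℝ → ℝ)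
    (hv₂fst : ∀ x₁ x₂, v₂fst x₁ x₂ = 6 * x₁ / δ x₁ * (k x₁ x₂ ^ 2 - 1 / 4))
    (hv₂snd : ∀ x₁ x₂, v₂snd x₁ x₂ =
      (k x₁ x₂ + 1 / 2) + G₂ x₁ x₂ * (k x₁ x₂ ^ 2 - 1 / 4)) :
    ∀ x₁ x₂ : ℝ,
      deriv (fun t => v₂fst t x₂) x₁ + deriv (fun s => v₂snd x₁ s) x₂ = 0 := by
  intro x₁ x₂
  have hsub : (0:ℝ) < κ₁ - κ := sub_pos.mpr hκ₁
  have hDpos : ∀ t : ℝ, (0:ℝ) < ε + (κ₁ - κ) * t ^ 2 := fun t => by positivity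
  have hD : ε + (κ₁ - κ) * x₁ ^ 2 ≠ 0 := (hDpos x₁).ne'
  set D : ℝ := ε + (κ₁ - κ) * x₁ ^ 2 with hDdef
  set D' : ℝ := 2 * (κ₁ - κ) * x₁ with hD'def
  set N : ℝ := x₂ - κ * x₁ ^ 2 with hNdef
  set W : ℝ := N / D - 1 / 2 with hWdef
  -- derivative of the denominator
  have hd : HasDerivAt (fun t : ℝ => ε + (κ₁ - κ) * t ^ 2) D' x₁ := by
    have := ((hasDerivAt_pow 2 x₁).const_mul (κ₁ - κ)).const_add ε
    refine this.congr_deriv ?_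
    simp [hD'def]; ring
  -- derivative of the numerator 6t
  have hu : HasDerivAt (fun t : ℝ => 6 * t / (ε + (κ₁ - κ) * t ^ 2))
      ((6 * D - 6 * x₁ * D') / D ^ 2) x₁ := by
    have h := ((hasDerivAt_id x₁).const_mul 6).div hd hD
    simp only [id] at h
    refine h.congr_deriv ?_
    rw [hDdef]; ring
  -- derivative of W(t)
  have hw : HasDerivAt (fun t : ℝ => (x₂ - κ * t ^ 2) / (ε + (κ₁ - κ) * t ^ 2) - 1 / 2)
      (((-2 * κ * x₁) * D - N * D') / D ^ 2) x₁ := by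
    have hnum : HasDerivAt (fun t : ℝ => x₂ - κ * t ^ 2) (-2 * κ * x₁) x₁ := by
      have := ((hasDerivAt_pow 2 x₁).const_mul κ).const_sub x₂
      refine this.congr_deriv ?_; ring
    exact (hnum.div hd hD).sub_const _
  -- derivative of first component
  have h1 : HasDerivAt (fun t => v₂fst t x₂)
      ((6 * D - 6 * x₁ * D') / D ^ 2 * (W ^ 2 - 1 / 4)
        + 6 * x₁ / D * (2 * W * (((-2 * κ * x₁) * D - N * D') / D ^ 2))) x₁ := by
    have heq : (fun t => v₂fst t x₂) = fun t : ℝ =>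
        6 * t / (ε + (κ₁ - κ) * t ^ 2) *
          (((x₂ - κ * t ^ 2) / (ε + (κ₁ - κ) * t ^ 2) - 1 / 2) ^ 2 - 1 / 4) := by
      funext t; rw [hv₂fst, hk, hδ]
    rw [heq]
    have hg : HasDerivAt (fun t : ℝ =>
        ((x₂ - κ * t ^ 2) / (ε + (κ₁ - κ) * t ^ 2) - 1 / 2) ^ 2 - 1 / 4)
        (2 * W * (((-2 * κ * x₁) * D - N * D') / D ^ 2)) x₁ := by
      have := (hw.pow 2).sub_const (1/4 : ℝ)
      refine this.congr_deriv ?_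
      simp [hWdef]
      exact Or.inl rfl
    exact hu.mul hg
  -- derivative of second component (in x₂); here c, b are constants
  set c : ℝ := 6 * x₁ / D * ((κ₁ + κ) * x₁) with hcdef
  set b : ℝ := 6 * x₁ / D * (2 * (κ₁ - κ) * x₁) with hbdef
  have hK : HasDerivAt (fun s : ℝ => (s - κ * x₁ ^ 2) / D - 1 / 2) (1 / D) x₂ := by
    have : HasDerivAt (fun s : ℝ => (s - κ * x₁ ^ 2) / D) (1 / D) x₂ := by
      simpa using ((hasDerivAt_id x₂).sub_const (κ * x₁ ^ 2)).div_const D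
    exact this.sub_const _
  have h2 : HasDerivAt (fun s => v₂snd x₁ s)
      (1 / D + (-2 * (1 / D) + b * (1 / D)) * (W ^ 2 - 1 / 4)
        + (-2 * W + c + b * W) * (2 * W * (1 / D))) x₂ := by
    have heq : (fun s => v₂snd x₁ s) = fun s : ℝ =>
        (((s - κ * x₁ ^ 2) / D - 1 / 2) + 1 / 2)
          + (-2 * ((s - κ * x₁ ^ 2) / D - 1 / 2) + c + b * ((s - κ * x₁ ^ 2) / D - 1 / 2))
            * (((s - κ * x₁ ^ 2) / D - 1 / 2) ^ 2 - 1 / 4) := by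
      funext s
      rw [hv₂snd, hG₂, hk, hδ]
      simp only [← hDdef, ← hcdef, ← hbdef]
      ring
    rw [heq]
    have hKval : (x₂ - κ * x₁ ^ 2) / D - 1 / 2 = W := by rw [hWdef, hNdef]
    have hG : HasDerivAt (fun s : ℝ =>
        -2 * ((s - κ * x₁ ^ 2) / D - 1 / 2) + c + b * ((s - κ * x₁ ^ 2) / D - 1 / 2))
        (-2 * (1 / D) + b * (1 / D)) x₂ :=
      ((hK.const_mul (-2)).add_const c).add (hK.const_mul b)
    have hSq : HasDerivAt (fun s : ℝ => ((s - κ * x₁ ^ 2) / D - 1 / 2) ^ 2 - 1 / 4)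
        (2 * W * (1 / D)) x₂ := by
      have := (hK.pow 2).sub_const (1/4 : ℝ)
      refine this.congr_deriv ?_
      rw [hKval]; ring
    have := (hK.add_const (1/2 : ℝ)).add (hG.mul hSq)
    refine this.congr_deriv ?_
    rw [hKval]; ring
  rw [h1.deriv, h2.deriv]
  rw [hWdef, hcdef, hbdef, hD'def, hNdef, hDdef]
  field_simp
  ring
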